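/- Let $0 < s \le \lambda < 1$, let $p_1, \ldots, p_n$ be random p-values with null set $\mathcal{H}_0 \subset \{1,\ldots,n\}$, where the null p-values $\{p_i : i \in \mathcal{H}_0\}$ are i.i.d. and independent of the non-null p-values. For $k = 1, \ldots, n$ define $V^+(k) = \sum_{i \in \mathcal{H}_0, i \le k} I(p_i \le s)$, $V^-(k) = \sum_{i \in \mathcal{H}_0, i \le k} I(p_i > \lambda)$, $M(k) = \frac{V^+(k)}{1 + V^-(k)}$, and let $\mathcal{F}_k$ be the $\sigma$-field generated by the non-null p-values together with $V^+(k)$, $V^-(k)$, and the indicator pairs $\{(I(p_i \le s), I(p_i > \lambda)) : i > k\}$. Then $M$ is a supermartingale with respect to the backward filtration $\mathcal{F}_n \subset \mathcal{F}_{n-1} \subset \cdots \subset \mathcal{F}_1$: for every $k \ge 2$, $\mathbb{E}[M(k-1) \mid \mathcal{F}_k] \le M(k)$ almost surely. -/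

import Mathlib

open MeasureTheory ProbabilityTheory
open scoped Classical

noncomputable section

variable {Ω : Type*}

/-- `V⁺(k)`: number of null p-values among the first `k` that are at most `s`. -/
def Vplus (n : ℕ) (p : Fin n → Ω → ℝ) (H₀ : Finset (Fin n)) (s : ℝ) (k : ℕ) (ω : Ω) : ℕ :=
  (H₀.filter (fun i : Fin n => (i : ℕ) + 1 ≤ k ∧ p i ω ≤ s)).card

/-- `V⁻(k)`: number of null p-values among the first `k` that exceed `λ`. -/
def Vminus (n : ℕ) (p : Fin n → Ω → ℝ) (H₀ : Finset (Fin n)) (lam : ℝ) (k : ℕ) (ω : Ω) : ℕ :=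
  (H₀.filter (fun i : Fin n => (i : ℕ) + 1 ≤ k ∧ lam < p i ω)).card

/-- The backward (super)martingale `M(k) = V⁺(k) / (1 + V⁻(k))`. -/
def Mproc (n : ℕ) (p : Fin n → Ω → ℝ) (H₀ : Finset (Fin n)) (s lam : ℝ) (k : ℕ) (ω : Ω) : ℝ :=
  (Vplus n p H₀ s k ω : ℝ) / (1 + (Vminus n p H₀ lam k ω : ℝ))

/-- The backward filtration: `𝓕ₖ` is generated by the non-null p-values, the counts
`V⁺(k), V⁻(k)`, and the indicator pairs `(I(pᵢ ≤ s), I(pᵢ > λ))` for null `i > k`. -/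
def Ffilt [MeasurableSpace Ω] (n : ℕ) (p : Fin n → Ω → ℝ) (H₀ : Finset (Fin n))
    (s lam : ℝ) (k : ℕ) : MeasurableSpace Ω :=
  (⨆ i ∈ (H₀ᶜ : Finset (Fin n)), MeasurableSpace.comap (p i) (borel ℝ))
  ⊔ MeasurableSpace.comap
      (fun ω => (Vplus n p H₀ s k ω, Vminus n p H₀ lam k ω)) ⊤
  ⊔ (⨆ i ∈ H₀.filter (fun i : Fin n => k < (i : ℕ) + 1),
      MeasurableSpace.comap
        (fun ω => (decide (p i ω ≤ s), decide (lam < p i ω))) ⊤)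

namespace ASSaux

variable {n : ℕ}

/-- path-space version of `Vplus`. -/
def VplusX (H₀ : Finset (Fin n)) (s : ℝ) (k : ℕ) (x : Fin n → ℝ) : ℕ :=
  (H₀.filter (fun i : Fin n => (i : ℕ) + 1 ≤ k ∧ x i ≤ s)).card

/-- path-space version of `Vminus`. -/
def VminusX (H₀ : Finset (Fin n)) (lam : ℝ) (k : ℕ) (x : Fin n → ℝ) : ℕ :=
  (H₀.filter (fun i : Fin n => (i : ℕ) + 1 ≤ k ∧ lam < x i)).card

/-- path-space version of `Mproc`. -/
def GX (H₀ : Finset (Fin n)) (s lam : ℝ) (k : ℕ) (x : Fin n → ℝ) : ℝ :=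
  (VplusX H₀ s k x : ℝ) / (1 + VminusX H₀ lam k x)

/-- "leave one out" variant of `GX`. -/
def HX (H₀ : Finset (Fin n)) (s lam : ℝ) (k : ℕ) (j : Fin n) (x : Fin n → ℝ) : ℝ :=
  ((VplusX H₀ s k x : ℝ) - if x j ≤ s then 1 else 0) /
  (1 + (VminusX H₀ lam k x : ℝ) - if lam < x j then 1 else 0)

/-- path-space version of the filtration σ-algebra. -/
def MX (H₀ : Finset (Fin n)) (s lam : ℝ) (k : ℕ) : MeasurableSpace (Fin n → ℝ) :=
  (⨆ i ∈ (H₀ᶜ : Finset (Fin n)),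
      MeasurableSpace.comap (fun x : Fin n → ℝ => x i) (borel ℝ))
  ⊔ MeasurableSpace.comap (fun x => (VplusX H₀ s k x, VminusX H₀ lam k x)) ⊤
  ⊔ (⨆ i ∈ H₀.filter (fun i : Fin n => k < (i : ℕ) + 1),
      MeasurableSpace.comap (fun x : Fin n → ℝ =>
        (decide (x i ≤ s), decide (lam < x i))) ⊤)

lemma measurable_VplusX (H₀ : Finset (Fin n)) (s : ℝ) (k : ℕ) :
    Measurable (VplusX H₀ s k) := by
  have : VplusX H₀ s k = fun x =>
      ∑ i ∈ H₀, if (i : ℕ) + 1 ≤ k ∧ x i ≤ s then 1 else 0 := by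
    funext x; rw [VplusX, Finset.card_filter]
  rw [this]
  exact Finset.measurable_sum _ fun i _ =>
    Measurable.ite ((MeasurableSet.const _).inter ((measurable_pi_apply i) measurableSet_Iic))
      measurable_const measurable_const

lemma measurable_VminusX (H₀ : Finset (Fin n)) (lam : ℝ) (k : ℕ) :
    Measurable (VminusX H₀ lam k) := by
  have : VminusX H₀ lam k = fun x =>
      ∑ i ∈ H₀, if (i : ℕ) + 1 ≤ k ∧ lam < x i then 1 else 0 := by
    funext x; rw [VminusX, Finset.card_filter]
  rw [this]
  exact Finset.measurable_sum _ fun i _ =>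
    Measurable.ite ((MeasurableSet.const _).inter ((measurable_pi_apply i) measurableSet_Ioi))
      measurable_const measurable_const

lemma measurable_GX (H₀ : Finset (Fin n)) (s lam : ℝ) (k : ℕ) :
    Measurable (GX H₀ s lam k) :=
  (measurable_from_top.comp (measurable_VplusX H₀ s k)).div
    (measurable_const.add (measurable_from_top.comp (measurable_VminusX H₀ lam k)))

lemma measurable_HX (H₀ : Finset (Fin n)) (s lam : ℝ) (k : ℕ) (j : Fin n) :
    Measurable (HX H₀ s lam k j) := by
  apply Measurable.div
  · exact (measurable_from_top.comp (measurable_VplusX H₀ s k)).sub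
      (Measurable.ite ((measurable_pi_apply j) measurableSet_Iic)
        measurable_const measurable_const)
  · exact ((measurable_const.add
      (measurable_from_top.comp (measurable_VminusX H₀ lam k)))).sub
      (Measurable.ite ((measurable_pi_apply j) measurableSet_Ioi)
        measurable_const measurable_const)

lemma VplusX_le_card (H₀ : Finset (Fin n)) (s : ℝ) (k : ℕ) (x : Fin n → ℝ) :
    VplusX H₀ s k x ≤ H₀.card :=
  Finset.card_le_card (Finset.filter_subset _ _)

lemma GX_nonneg (H₀ : Finset (Fin n)) (s lam : ℝ) (k : ℕ) (x : Fin n → ℝ) :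
    0 ≤ GX H₀ s lam k x := by
  apply div_nonneg (by positivity) (by positivity)

lemma GX_norm_le (H₀ : Finset (Fin n)) (s lam : ℝ) (k : ℕ) (x : Fin n → ℝ) :
    ‖GX H₀ s lam k x‖ ≤ (H₀.card : ℝ) := by
  rw [Real.norm_of_nonneg (GX_nonneg H₀ s lam k x)]
  have h1 : (1:ℝ) ≤ 1 + (VminusX H₀ lam k x : ℝ) :=
    le_add_of_nonneg_right (Nat.cast_nonneg _)
  calc GX H₀ s lam k x ≤ (VplusX H₀ s k x : ℝ) / 1 := by
        apply div_le_div_of_nonneg_left (by positivity) (by norm_num) h1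
    _ = (VplusX H₀ s k x : ℝ) := div_one _
    _ ≤ (H₀.card : ℝ) := by exact_mod_cast VplusX_le_card H₀ s k x

lemma HX_nonneg (H₀ : Finset (Fin n)) (s lam : ℝ) (k : ℕ) {j : Fin n}
    (hjH : j ∈ H₀) (hjk : (j : ℕ) + 1 ≤ k) (x : Fin n → ℝ) :
    0 ≤ HX H₀ s lam k j x := by
  apply div_nonneg
  · by_cases h : x j ≤ s
    · rw [if_pos h]
      have : 1 ≤ VplusX H₀ s k x :=
        Finset.card_pos.2 ⟨j, Finset.mem_filter.2 ⟨hjH, hjk, h⟩⟩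
      have : (1:ℝ) ≤ (VplusX H₀ s k x : ℝ) := by exact_mod_cast this
      linarith
    · rw [if_neg h]
      have h0 : (0:ℝ) ≤ (VplusX H₀ s k x : ℝ) := Nat.cast_nonneg _
      linarith
  · by_cases h : lam < x j
    · rw [if_pos h]
      have : 1 ≤ VminusX H₀ lam k x :=
        Finset.card_pos.2 ⟨j, Finset.mem_filter.2 ⟨hjH, hjk, h⟩⟩
      have : (1:ℝ) ≤ (VminusX H₀ lam k x : ℝ) := by exact_mod_cast this
      linarith
    · rw [if_neg h]
      have h0 : (0:ℝ) ≤ (VminusX H₀ lam k x : ℝ) := Nat.cast_nonneg _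
      linarith

lemma HX_denom_ge_one (H₀ : Finset (Fin n)) (s lam : ℝ) (k : ℕ) {j : Fin n}
    (hjH : j ∈ H₀) (hjk : (j : ℕ) + 1 ≤ k) (x : Fin n → ℝ) :
    (1:ℝ) ≤ 1 + (VminusX H₀ lam k x : ℝ) - if lam < x j then 1 else 0 := by
  by_cases h : lam < x j
  · rw [if_pos h]
    have : 1 ≤ VminusX H₀ lam k x :=
      Finset.card_pos.2 ⟨j, Finset.mem_filter.2 ⟨hjH, hjk, h⟩⟩
    have : (1:ℝ) ≤ (VminusX H₀ lam k x : ℝ) := by exact_mod_cast this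
    linarith
  · rw [if_neg h]
    have h0 : (0:ℝ) ≤ (VminusX H₀ lam k x : ℝ) := Nat.cast_nonneg _
    linarith

lemma HX_norm_le (H₀ : Finset (Fin n)) (s lam : ℝ) (k : ℕ) {j : Fin n}
    (hjH : j ∈ H₀) (hjk : (j : ℕ) + 1 ≤ k) (x : Fin n → ℝ) :
    ‖HX H₀ s lam k j x‖ ≤ (H₀.card : ℝ) := by
  rw [Real.norm_of_nonneg (HX_nonneg H₀ s lam k hjH hjk x)]
  have hd := HX_denom_ge_one H₀ s lam k hjH hjk x
  have hnum : (VplusX H₀ s k x : ℝ) - (if x j ≤ s then 1 else 0) ≤ (H₀.card : ℝ) := by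
    have h1 : (VplusX H₀ s k x : ℝ) ≤ (H₀.card : ℝ) := by
      exact_mod_cast VplusX_le_card H₀ s k x
    have h2 : (0:ℝ) ≤ if x j ≤ s then 1 else 0 := by positivity
    linarith
  have hnum0 : 0 ≤ (VplusX H₀ s k x : ℝ) - (if x j ≤ s then 1 else 0) := by
    by_cases h : x j ≤ s
    · rw [if_pos h]
      have : 1 ≤ VplusX H₀ s k x :=
        Finset.card_pos.2 ⟨j, Finset.mem_filter.2 ⟨hjH, hjk, h⟩⟩
      have : (1:ℝ) ≤ (VplusX H₀ s k x : ℝ) := by exact_mod_cast this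
      linarith
    · rw [if_neg h]
      have h0 : (0:ℝ) ≤ (VplusX H₀ s k x : ℝ) := Nat.cast_nonneg _
      linarith
  calc HX H₀ s lam k j x
      ≤ ((VplusX H₀ s k x : ℝ) - if x j ≤ s then 1 else 0) / 1 := by
        apply div_le_div_of_nonneg_left hnum0 (by norm_num) hd
    _ ≤ (H₀.card : ℝ) := by rw [div_one]; exact hnum

/-- swap invariance of the counts (generic predicate). -/
lemma card_filter_swap (H₀ : Finset (Fin n)) (P : ℝ → Prop) (k : ℕ) {a b : Fin n}
    (ha : a ∈ H₀) (hb : b ∈ H₀) (hak : (a : ℕ) + 1 ≤ k) (hbk : (b : ℕ) + 1 ≤ k)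
    (x : Fin n → ℝ) :
    (H₀.filter (fun i : Fin n => (i : ℕ) + 1 ≤ k ∧ P (x (Equiv.swap a b i)))).card
      = (H₀.filter (fun i : Fin n => (i : ℕ) + 1 ≤ k ∧ P (x i))).card := by
  classical
  have hmemk : ∀ i : Fin n, i ∈ H₀ ∧ (i : ℕ) + 1 ≤ k →
      Equiv.swap a b i ∈ H₀ ∧ ((Equiv.swap a b i : Fin n) : ℕ) + 1 ≤ k := by
    intro i ⟨hiH, hik⟩
    by_cases h1 : i = a
    · rw [h1, Equiv.swap_apply_left]; exact ⟨hb, hbk⟩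
    by_cases h2 : i = b
    · rw [h2, Equiv.swap_apply_right]; exact ⟨ha, hak⟩
    · rw [Equiv.swap_apply_of_ne_of_ne h1 h2]; exact ⟨hiH, hik⟩
  apply Finset.card_bij' (fun i _ => Equiv.swap a b i) (fun i _ => Equiv.swap a b i)
  · intro i hi
    obtain ⟨hiH, hik, hix⟩ := Finset.mem_filter.1 hi
    obtain ⟨h1, h2⟩ := hmemk i ⟨hiH, hik⟩
    exact Finset.mem_filter.2 ⟨h1, h2, hix⟩
  · intro i hi
    obtain ⟨hiH, hik, hix⟩ := Finset.mem_filter.1 hi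
    obtain ⟨h1, h2⟩ := hmemk i ⟨hiH, hik⟩
    refine Finset.mem_filter.2 ⟨h1, h2, ?_⟩
    rw [Equiv.swap_apply_self]; exact hix
  · intro i _; exact Equiv.swap_apply_self a b i
  · intro i _; exact Equiv.swap_apply_self a b i

lemma VplusX_swap (H₀ : Finset (Fin n)) (s : ℝ) (k : ℕ) {a b : Fin n}
    (ha : a ∈ H₀) (hb : b ∈ H₀) (hak : (a : ℕ) + 1 ≤ k) (hbk : (b : ℕ) + 1 ≤ k)
    (x : Fin n → ℝ) :
    VplusX H₀ s k (fun i => x (Equiv.swap a b i)) = VplusX H₀ s k x :=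
  card_filter_swap H₀ (fun t => t ≤ s) k ha hb hak hbk x

lemma VminusX_swap (H₀ : Finset (Fin n)) (lam : ℝ) (k : ℕ) {a b : Fin n}
    (ha : a ∈ H₀) (hb : b ∈ H₀) (hak : (a : ℕ) + 1 ≤ k) (hbk : (b : ℕ) + 1 ≤ k)
    (x : Fin n → ℝ) :
    VminusX H₀ lam k (fun i => x (Equiv.swap a b i)) = VminusX H₀ lam k x :=
  card_filter_swap H₀ (fun t => lam < t) k ha hb hak hbk x

/-- generic: the step-k count splits off the index `i₀` with `i₀+1 = k`. -/
lemma card_filter_step (H₀ : Finset (Fin n)) (P : Fin n → Prop) {k : ℕ} {i₀ : Fin n}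
    (hi₀ : (i₀ : ℕ) + 1 = k) (hmem : i₀ ∈ H₀) :
    (H₀.filter (fun i : Fin n => (i : ℕ) + 1 ≤ k ∧ P i)).card
      = (H₀.filter (fun i : Fin n => (i : ℕ) + 1 ≤ k - 1 ∧ P i)).card
        + (if P i₀ then 1 else 0) := by
  classical
  have hk1 : 1 ≤ k := by omega
  have hsplit : H₀.filter (fun i : Fin n => (i : ℕ) + 1 ≤ k ∧ P i)
      = (H₀.filter (fun i : Fin n => (i : ℕ) + 1 ≤ k - 1 ∧ P i))
        ∪ (H₀.filter (fun i : Fin n => i = i₀ ∧ P i)) := by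
    rw [← Finset.filter_or]
    apply Finset.filter_congr
    intro i _
    constructor
    · rintro ⟨hik, hP⟩
      rcases eq_or_lt_of_le hik with h | h
      · exact Or.inr ⟨Fin.ext (by omega), hP⟩
      · exact Or.inl ⟨by omega, hP⟩
    · rintro (⟨hik, hP⟩ | ⟨rfl, hP⟩)
      · exact ⟨by omega, hP⟩
      · exact ⟨by omega, hP⟩
  rw [hsplit, Finset.card_union_of_disjoint]
  · congr 1
    by_cases hP : P i₀
    · have : H₀.filter (fun i : Fin n => i = i₀ ∧ P i) = {i₀} := by
        apply Finset.eq_singleton_iff_unique_mem.2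
        refine ⟨Finset.mem_filter.2 ⟨hmem, rfl, hP⟩, ?_⟩
        intro i hi; exact (Finset.mem_filter.1 hi).2.1
      rw [this, if_pos hP, Finset.card_singleton]
    · have : H₀.filter (fun i : Fin n => i = i₀ ∧ P i) = ∅ := by
        apply Finset.filter_false_of_mem
        rintro i _ ⟨rfl, hP'⟩; exact hP hP'
      rw [this, if_neg hP, Finset.card_empty]
  · rw [Finset.disjoint_left]
    intro i hi1 hi2
    obtain ⟨_, hik, _⟩ := Finset.mem_filter.1 hi1
    obtain ⟨_, rfl, _⟩ := Finset.mem_filter.1 hi2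
    omega

/-- `GX` at time `k-1` equals `HX` at time `k` with the `i₀`-th p-value left out. -/
lemma GX_pred (H₀ : Finset (Fin n)) (s lam : ℝ) {k : ℕ} {i₀ : Fin n}
    (hi₀ : (i₀ : ℕ) + 1 = k) (hmem : i₀ ∈ H₀) (x : Fin n → ℝ) :
    GX H₀ s lam (k - 1) x = HX H₀ s lam k i₀ x := by
  have h1 := card_filter_step H₀ (fun i => x i ≤ s) hi₀ hmem
  have h2 := card_filter_step H₀ (fun i => lam < x i) hi₀ hmem
  have e1 : (VplusX H₀ s (k-1) x : ℝ)
      = (VplusX H₀ s k x : ℝ) - if x i₀ ≤ s then 1 else 0 := by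
    rw [VplusX, VplusX, h1]
    by_cases h : x i₀ ≤ s <;> simp [h]
  have e2 : (VminusX H₀ lam (k-1) x : ℝ)
      = (VminusX H₀ lam k x : ℝ) - if lam < x i₀ then 1 else 0 := by
    rw [VminusX, VminusX, h2]
    by_cases h : lam < x i₀ <;> simp [h]
  rw [GX, HX, e1, e2]
  ring_nf

/-- if `i₀ ∉ H₀`, nothing changes from time `k-1` to time `k`. -/
lemma GX_pred_of_not_mem (H₀ : Finset (Fin n)) (s lam : ℝ) {k : ℕ} {i₀ : Fin n}
    (hi₀ : (i₀ : ℕ) + 1 = k) (hmem : i₀ ∉ H₀) (x : Fin n → ℝ) :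
    GX H₀ s lam (k - 1) x = GX H₀ s lam k x := by
  have key : ∀ P : Fin n → Prop,
      H₀.filter (fun i : Fin n => (i : ℕ) + 1 ≤ k - 1 ∧ P i)
        = H₀.filter (fun i : Fin n => (i : ℕ) + 1 ≤ k ∧ P i) := by
    intro P
    apply Finset.filter_congr
    intro i hi
    constructor
    · rintro ⟨h, hP⟩; exact ⟨by omega, hP⟩
    · rintro ⟨h, hP⟩
      refine ⟨?_, hP⟩
      rcases eq_or_lt_of_le h with h' | h'
      · exact absurd (Fin.ext (show (i:ℕ) = (i₀:ℕ) by omega) ▸ hi) hmem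
      · omega
  rw [GX, GX, VplusX, VplusX, VminusX, VminusX, key (fun i => x i ≤ s),
    key (fun i => lam < x i)]

/-- pointwise super-martingale inequality for the leave-one-out averages. -/
lemma sum_HX_le (H₀ : Finset (Fin n)) {s lam : ℝ} (hsl : s ≤ lam) (k : ℕ)
    (x : Fin n → ℝ) :
    ∑ j ∈ H₀.filter (fun i : Fin n => (i : ℕ) + 1 ≤ k), HX H₀ s lam k j x
      ≤ ((H₀.filter (fun i : Fin n => (i : ℕ) + 1 ≤ k)).card : ℝ)
          * GX H₀ s lam k x := by
  classical
  set T : Finset (Fin n) := H₀.filter (fun i : Fin n => (i : ℕ) + 1 ≤ k) with hT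
  set aN : ℕ := VplusX H₀ s k x with haN
  set bN : ℕ := VminusX H₀ lam k x with hbN
  have haT : aN = (T.filter (fun i : Fin n => x i ≤ s)).card := by
    rw [haN, VplusX, hT, Finset.filter_filter]
  have hbT : bN = (T.filter (fun i : Fin n => lam < x i)).card := by
    rw [hbN, VminusX, hT, Finset.filter_filter]
  have hsplit1 := Finset.sum_filter_add_sum_filter_not T (fun i : Fin n => x i ≤ s)
    (fun j => HX H₀ s lam k j x)
  have hsplit2 := Finset.sum_filter_add_sum_filter_not
    (T.filter (fun i : Fin n => ¬ x i ≤ s)) (fun i : Fin n => lam < x i)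
    (fun j => HX H₀ s lam k j x)
  set a : ℝ := (aN : ℝ) with ha
  set b : ℝ := (bN : ℝ) with hb
  have hplus : ∀ j ∈ T.filter (fun i : Fin n => x i ≤ s),
      HX H₀ s lam k j x = (a - 1) / (1 + b) := by
    intro j hj
    obtain ⟨_, hjs⟩ := Finset.mem_filter.1 hj
    have hnl : ¬ lam < x j := not_lt.2 (hjs.trans hsl)
    rw [HX, if_pos hjs, if_neg hnl]
    norm_num [ha, hb, haN, hbN]
  have hminus : ∀ j ∈ (T.filter (fun i : Fin n => ¬ x i ≤ s)).filter
      (fun i : Fin n => lam < x i),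
      HX H₀ s lam k j x = a / b := by
    intro j hj
    obtain ⟨hj1, hjl⟩ := Finset.mem_filter.1 hj
    obtain ⟨_, hjs⟩ := Finset.mem_filter.1 hj1
    rw [HX, if_neg hjs, if_pos hjl]
    norm_num [ha, hb, haN, hbN]
  have hzero : ∀ j ∈ (T.filter (fun i : Fin n => ¬ x i ≤ s)).filter
      (fun i : Fin n => ¬ lam < x i),
      HX H₀ s lam k j x = a / (1 + b) := by
    intro j hj
    obtain ⟨hj1, hjl⟩ := Finset.mem_filter.1 hj
    obtain ⟨_, hjs⟩ := Finset.mem_filter.1 hj1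
    rw [HX, if_neg hjs, if_neg hjl]
    norm_num [ha, hb, haN, hbN]
  have hminuscard : ((T.filter (fun i : Fin n => ¬ x i ≤ s)).filter
      (fun i : Fin n => lam < x i)).card = bN := by
    rw [hbT, Finset.filter_filter]
    congr 1
    apply Finset.filter_congr
    intro i _
    constructor
    · rintro ⟨_, h⟩; exact h
    · intro h; exact ⟨not_le.2 (lt_of_le_of_lt hsl h), h⟩
  set cN : ℕ := ((T.filter (fun i : Fin n => ¬ x i ≤ s)).filter
      (fun i : Fin n => ¬ lam < x i)).card with hcN
  have hmcard : (T.card : ℝ) = a + b + cN := by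
    have h1 : T.card = aN + (T.filter (fun i : Fin n => ¬ x i ≤ s)).card := by
      rw [haT]; exact (Finset.card_filter_add_card_filter_not _).symm
    have h2 : (T.filter (fun i : Fin n => ¬ x i ≤ s)).card = bN + cN := by
      rw [← hminuscard, hcN]
      exact (Finset.card_filter_add_card_filter_not _).symm
    rw [h1, h2]; push_cast [ha, hb]; ring
  set c : ℝ := (cN : ℝ) with hc
  have hsum : ∑ j ∈ T, HX H₀ s lam k j x
      = a * ((a - 1) / (1 + b)) + (b * (a / b) + c * (a / (1 + b))) := by
    rw [← hsplit1, ← hsplit2]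
    congr 1
    · rw [Finset.sum_congr rfl hplus, Finset.sum_const, nsmul_eq_mul, ha, haT]
    congr 1
    · rw [Finset.sum_congr rfl hminus, Finset.sum_const, nsmul_eq_mul, hminuscard, hb]
    · rw [Finset.sum_congr rfl hzero, Finset.sum_const, nsmul_eq_mul, hc, hcN]
  rw [hsum, GX, ← haN, ← hbN, ← ha, ← hb, hmcard]
  have ha0 : 0 ≤ a := by rw [ha]; positivity
  have hb0 : 0 ≤ b := by rw [hb]; positivity
  have hc0 : 0 ≤ c := by rw [hc]; positivity
  have hD : (0:ℝ) < 1 + b := by linarith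
  have h1 : b * (a / b) ≤ a := by
    rcases eq_or_ne b 0 with h | h
    · simp [h]; exact ha0
    · rw [mul_div_cancel₀ _ h]
  have h2 : a * ((a - 1) / (1 + b)) + (a + c * (a / (1 + b)))
      = (a + b + c) * (a / (1 + b)) := by
    field_simp
    ring
  linarith

/-- σ-algebra of sets invariant under a map. -/
def invSets {α : Type*} (W : α → α) : MeasurableSpace α where
  MeasurableSet' A := W ⁻¹' A = A
  measurableSet_empty := by simp
  measurableSet_compl := fun A hA => by
    show W ⁻¹' Aᶜ = Aᶜ
    rw [Set.preimage_compl, hA]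
  measurableSet_iUnion := fun g hg => by
    show W ⁻¹' (⋃ i, g i) = ⋃ i, g i
    rw [Set.preimage_iUnion]; exact Set.iUnion_congr hg

lemma comap_le_invSets {α γ : Type*} {m' : MeasurableSpace γ} {W : α → α} {f : α → γ}
    (hf : f ∘ W = f) : MeasurableSpace.comap f m' ≤ invSets W := by
  rintro _ ⟨S, -, rfl⟩
  show W ⁻¹' (f ⁻¹' S) = f ⁻¹' S
  rw [← Set.preimage_comp, hf]

/-- helper: comap of top σ-algebra along a map into a countable type. -/
lemma comap_top_le {α γ : Type*} [Countable γ] {m : MeasurableSpace α} {f : α → γ}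
    (hf : ∀ v : γ, MeasurableSet (f ⁻¹' {v})) :
    MeasurableSpace.comap f ⊤ ≤ m := by
  rintro _ ⟨S, -, rfl⟩
  have : f ⁻¹' S = ⋃ v ∈ S, f ⁻¹' {v} := by
    ext x; simp
  rw [this]
  exact MeasurableSet.biUnion S.to_countable fun v _ => hf v

lemma MX_le (H₀ : Finset (Fin n)) (s lam : ℝ) (k : ℕ) :
    MX H₀ s lam k ≤ MeasurableSpace.pi := by
  refine sup_le (sup_le ?_ ?_) ?_
  · refine iSup_le fun i => iSup_le fun _ => ?_
    have : borel ℝ = (inferInstance : MeasurableSpace ℝ) := BorelSpace.measurable_eq.symm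
    rw [this]
    exact (measurable_pi_apply i).comap_le
  · refine comap_top_le fun v => ?_
    have : (fun x => (VplusX H₀ s k x, VminusX H₀ lam k x)) ⁻¹' {v}
        = VplusX H₀ s k ⁻¹' {v.1} ∩ VminusX H₀ lam k ⁻¹' {v.2} := by
      ext x; simp [Prod.ext_iff]
    rw [this]
    exact ((measurable_VplusX H₀ s k) (measurableSet_singleton v.1)).inter
      ((measurable_VminusX H₀ lam k) (measurableSet_singleton v.2))
  · refine iSup_le fun i => iSup_le fun _ => ?_
    refine comap_top_le fun v => ?_
    have : (fun x : Fin n → ℝ => (decide (x i ≤ s), decide (lam < x i))) ⁻¹' {v}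
        = (fun x : Fin n → ℝ => decide (x i ≤ s)) ⁻¹' {v.1}
          ∩ (fun x : Fin n → ℝ => decide (lam < x i)) ⁻¹' {v.2} := by
      ext x; simp [Prod.ext_iff]
    rw [this]
    have hs1 : MeasurableSet {x : Fin n → ℝ | x i ≤ s} :=
      (measurable_pi_apply i) measurableSet_Iic
    have hs2 : MeasurableSet {x : Fin n → ℝ | lam < x i} :=
      (measurable_pi_apply i) measurableSet_Ioi
    have h1 : MeasurableSet ((fun x : Fin n → ℝ => decide (x i ≤ s)) ⁻¹' {v.1}) := by
      rcases Bool.dichotomy v.1 with h | h <;> rw [h]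
      · have : (fun x : Fin n → ℝ => decide (x i ≤ s)) ⁻¹' {false}
            = {x : Fin n → ℝ | x i ≤ s}ᶜ := by ext x; simp
        rw [this]; exact hs1.compl
      · have : (fun x : Fin n → ℝ => decide (x i ≤ s)) ⁻¹' {true}
            = {x : Fin n → ℝ | x i ≤ s} := by ext x; simp
        rw [this]; exact hs1
    have h2 : MeasurableSet ((fun x : Fin n → ℝ => decide (lam < x i)) ⁻¹' {v.2}) := by
      rcases Bool.dichotomy v.2 with h | h <;> rw [h]
      · have : (fun x : Fin n → ℝ => decide (lam < x i)) ⁻¹' {false}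
            = {x : Fin n → ℝ | lam < x i}ᶜ := by ext x; simp
        rw [this]; exact hs2.compl
      · have : (fun x : Fin n → ℝ => decide (lam < x i)) ⁻¹' {true}
            = {x : Fin n → ℝ | lam < x i} := by ext x; simp
        rw [this]; exact hs2
    exact h1.inter h2

/-- MX-measurable sets are invariant under swapping two null coordinates ≤ k. -/
lemma MX_inv (H₀ : Finset (Fin n)) (s lam : ℝ) (k : ℕ) {a b : Fin n}
    (ha : a ∈ H₀) (hb : b ∈ H₀) (hak : (a : ℕ) + 1 ≤ k) (hbk : (b : ℕ) + 1 ≤ k)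
    {A : Set (Fin n → ℝ)} (hA : MeasurableSet[MX H₀ s lam k] A) :
    (fun x : Fin n → ℝ => fun i => x (Equiv.swap a b i)) ⁻¹' A = A := by
  classical
  set W : (Fin n → ℝ) → (Fin n → ℝ) := fun x => fun i => x (Equiv.swap a b i) with hW
  have hle : MX H₀ s lam k ≤ invSets W := by
    refine sup_le (sup_le ?_ ?_) ?_
    · refine iSup_le fun i => iSup_le fun hi => comap_le_invSets ?_
      funext x
      show x (Equiv.swap a b i) = x i
      have hi' : i ∉ H₀ := by simpa using hi
      have h1 : i ≠ a := fun h => hi' (h ▸ ha)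
      have h2 : i ≠ b := fun h => hi' (h ▸ hb)
      rw [Equiv.swap_apply_of_ne_of_ne h1 h2]
    · refine comap_le_invSets ?_
      funext x
      show (VplusX H₀ s k (W x), VminusX H₀ lam k (W x))
        = (VplusX H₀ s k x, VminusX H₀ lam k x)
      rw [VplusX_swap H₀ s k ha hb hak hbk x, VminusX_swap H₀ lam k ha hb hak hbk x]
    · refine iSup_le fun i => iSup_le fun hi => comap_le_invSets ?_
      have hik : k < (i : ℕ) + 1 := (Finset.mem_filter.1 hi).2
      have h1 : i ≠ a := by rintro rfl; omega
      have h2 : i ≠ b := by rintro rfl; omega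
      funext x
      show (decide (x (Equiv.swap a b i) ≤ s), decide (lam < x (Equiv.swap a b i)))
        = (decide (x i ≤ s), decide (lam < x i))
      rw [Equiv.swap_apply_of_ne_of_ne h1 h2]
  exact hle A hA

lemma Ffilt_eq [MeasurableSpace Ω] (p : Fin n → Ω → ℝ) (H₀ : Finset (Fin n))
    (s lam : ℝ) (k : ℕ) :
    Ffilt n p H₀ s lam k
      = (MX H₀ s lam k).comap (fun ω => fun i => p i ω) := by
  unfold Ffilt MX
  rw [MeasurableSpace.comap_sup, MeasurableSpace.comap_sup]
  congr 1
  congr 1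
  · rw [MeasurableSpace.comap_iSup]
    apply iSup_congr
    intro i
    rw [MeasurableSpace.comap_iSup]
    apply iSup_congr
    intro _
    rw [MeasurableSpace.comap_comp]
    rfl
  · rw [MeasurableSpace.comap_comp]
    rfl
  · rw [MeasurableSpace.comap_iSup]
    apply iSup_congr
    intro i
    rw [MeasurableSpace.comap_iSup]
    apply iSup_congr
    intro _
    rw [MeasurableSpace.comap_comp]
    rfl

lemma key_product [MeasurableSpace Ω] (μ : Measure Ω) [IsProbabilityMeasure μ]
    (p : Fin n → Ω → ℝ) (H₀ : Finset (Fin n))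
    (hnulliid : iIndepFun
      (fun i : {i : Fin n // i ∈ H₀} => p i) μ)
    (hblockindep : IndepFun
      (fun ω => fun i : {i : Fin n // i ∈ H₀} => p i ω)
      (fun ω => fun i : {i : Fin n // i ∉ H₀} => p i ω) μ)
    (B : Fin n → Set ℝ) (hB : ∀ i, MeasurableSet (B i)) :
    μ (⋂ i, p i ⁻¹' B i)
      = (∏ i : {i : Fin n // i ∈ H₀}, μ (p i ⁻¹' B i))
        * μ (⋂ i : {i : Fin n // i ∉ H₀}, p (i : Fin n) ⁻¹' B i) := by
  have hnullpre : (fun ω => fun i : {i : Fin n // i ∈ H₀} => p i ω) ⁻¹'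
      (Set.pi Set.univ fun i : {i : Fin n // i ∈ H₀} => B i)
      = ⋂ i : {i : Fin n // i ∈ H₀}, p (i : Fin n) ⁻¹' B i := by
    ext ω; simp [Set.mem_pi]
  have hnonnullpre : (fun ω => fun i : {i : Fin n // i ∉ H₀} => p i ω) ⁻¹'
      (Set.pi Set.univ fun i : {i : Fin n // i ∉ H₀} => B i)
      = ⋂ i : {i : Fin n // i ∉ H₀}, p (i : Fin n) ⁻¹' B i := by
    ext ω; simp [Set.mem_pi]
  have hsplit : (⋂ i, p i ⁻¹' B i)
      = ((fun ω => fun i : {i : Fin n // i ∈ H₀} => p i ω) ⁻¹'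
          (Set.pi Set.univ fun i : {i : Fin n // i ∈ H₀} => B i))
        ∩ ((fun ω => fun i : {i : Fin n // i ∉ H₀} => p i ω) ⁻¹'
          (Set.pi Set.univ fun i : {i : Fin n // i ∉ H₀} => B i)) := by
    rw [hnullpre, hnonnullpre]
    ext ω
    simp only [Set.mem_iInter, Set.mem_inter_iff, Set.mem_preimage, Subtype.forall]
    constructor
    · intro h; exact ⟨fun i _ => h i, fun i _ => h i⟩
    · rintro ⟨h1, h2⟩ i
      by_cases hi : i ∈ H₀
      · exact h1 i hi
      · exact h2 i hi
  rw [hsplit, hblockindep.measure_inter_preimage_eq_mul _ _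
      (MeasurableSet.univ_pi fun i => hB i) (MeasurableSet.univ_pi fun i => hB i),
    hnullpre, hnonnullpre]
  congr 1
  exact hnulliid.meas_iInter fun i => ⟨B i, hB i, rfl⟩

lemma map_swap_eq [MeasurableSpace Ω] (μ : Measure Ω) [IsProbabilityMeasure μ]
    (p : Fin n → Ω → ℝ) (H₀ : Finset (Fin n))
    (hmeas : ∀ i, Measurable (p i))
    (hnulliid : iIndepFun
      (fun i : {i : Fin n // i ∈ H₀} => p i) μ)
    (hnullident : ∀ i ∈ H₀, ∀ j ∈ H₀, IdentDistrib (p i) (p j) μ μ)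
    (hblockindep : IndepFun
      (fun ω => fun i : {i : Fin n // i ∈ H₀} => p i ω)
      (fun ω => fun i : {i : Fin n // i ∉ H₀} => p i ω) μ)
    {a b : Fin n} (ha : a ∈ H₀) (hb : b ∈ H₀) :
    μ.map (fun ω => fun i => p (Equiv.swap a b i) ω)
      = μ.map (fun ω => fun i => p i ω) := by
  classical
  set σ := Equiv.swap a b with hσ
  have hσmem : ∀ i : Fin n, i ∈ H₀ → σ i ∈ H₀ := by
    intro i hi
    by_cases h1 : i = a
    · simpa [hσ, h1, Equiv.swap_apply_left] using hb
    by_cases h2 : i = b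
    · simpa [hσ, h2, Equiv.swap_apply_right] using ha
    · simpa [hσ, Equiv.swap_apply_of_ne_of_ne h1 h2] using hi
  have hσfix : ∀ i : Fin n, i ∉ H₀ → σ i = i := by
    intro i hi
    have h1 : i ≠ a := fun h => hi (h ▸ ha)
    have h2 : i ≠ b := fun h => hi (h ▸ hb)
    simp [hσ, Equiv.swap_apply_of_ne_of_ne h1 h2]
  have hm1 : Measurable (fun ω => fun i => p (σ i) ω) :=
    measurable_pi_lambda _ fun i => hmeas (σ i)
  have hm2 : Measurable (fun ω => fun i : Fin n => p i ω) :=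
    measurable_pi_lambda _ fun i => hmeas i
  refine MeasureTheory.ext_of_generate_finite _ generateFrom_pi.symm
    isPiSystem_pi ?_ ?_
  · rintro _ ⟨B, hB, rfl⟩
    simp only [Set.mem_univ_pi, Set.mem_setOf_eq] at hB
    have hB' : ∀ i, MeasurableSet (B i) := hB
    have hBox : MeasurableSet (Set.pi Set.univ B) := MeasurableSet.univ_pi hB'
    rw [Measure.map_apply hm1 hBox, Measure.map_apply hm2 hBox]
    have hpre1 : (fun ω => fun i => p (σ i) ω) ⁻¹' Set.pi Set.univ B
        = ⋂ i, p (σ i) ⁻¹' B i := by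
      ext ω; simp [Set.mem_pi]
    have hpre2 : (fun ω => fun i : Fin n => p i ω) ⁻¹' Set.pi Set.univ B
        = ⋂ i, p i ⁻¹' B i := by
      ext ω; simp [Set.mem_pi]
    rw [hpre1, hpre2]
    have hreindex : (⋂ i, p (σ i) ⁻¹' B i) = ⋂ i, p i ⁻¹' B (σ i) := by
      have := σ.surjective.iInter_comp (g := fun i => p (σ i) ⁻¹' B i)
      rw [← this]
      apply Set.iInter_congr
      intro i
      rw [Equiv.swap_apply_self]
    rw [hreindex,
      key_product μ p H₀ hnulliid hblockindep (fun i => B (σ i)) (fun i => hB' _),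
      key_product μ p H₀ hnulliid hblockindep B hB']
    congr 1
    · let τ : Equiv.Perm {i : Fin n // i ∈ H₀} :=
        Function.Involutive.toPerm (fun i => ⟨σ i, hσmem i i.2⟩)
          (fun i => by ext; simp [hσ, Equiv.swap_apply_self])
      rw [← Equiv.prod_comp τ (fun i : {i : Fin n // i ∈ H₀} => μ (p i ⁻¹' B (σ i)))]
      apply Finset.prod_congr rfl
      intro i _
      have hcoe : ((τ i : {i : Fin n // i ∈ H₀}) : Fin n) = σ i := rfl
      rw [hcoe]
      have hswap : B (σ (σ (i : Fin n))) = B i := by rw [Equiv.swap_apply_self]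
      rw [hswap]
      exact ((hnullident _ (hσmem _ i.2) _ i.2).measure_mem_eq (hB' _))
    · congr 1
      apply Set.iInter_congr
      intro i
      rw [hσfix i i.2]
  · simp [Measure.map_apply hm1 MeasurableSet.univ, Measure.map_apply hm2 MeasurableSet.univ]

end ASSaux

/-- **Backward supermartingale property for Adaptive SeqStep.** If the null p-values are
i.i.d. and independent of the non-null p-values, then `M(k) = V⁺(k)/(1 + V⁻(k))` is a
supermartingale with respect to the backward filtration `𝓕ₙ ⊂ ⋯ ⊂ 𝓕₁`:
for `2 ≤ k ≤ n`, `E[M(k-1) ∣ 𝓕ₖ] ≤ M(k)` almost surely. -/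
theorem Mproc_backward_supermartingale [MeasurableSpace Ω]
    (μ : Measure Ω) [IsProbabilityMeasure μ]
    (n : ℕ) (p : Fin n → Ω → ℝ) (H₀ : Finset (Fin n))
    (hmeas : ∀ i, Measurable (p i))
    (hrange : ∀ i ω, p i ω ∈ Set.Icc (0 : ℝ) 1)
    (hnulliid : iIndepFun
      (fun i : {i : Fin n // i ∈ H₀} => p i) μ)
    (hnullident : ∀ i ∈ H₀, ∀ j ∈ H₀, IdentDistrib (p i) (p j) μ μ)
    (hblockindep : IndepFun
      (fun ω => fun i : {i : Fin n // i ∈ H₀} => p i ω)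
      (fun ω => fun i : {i : Fin n // i ∉ H₀} => p i ω) μ)
    (s lam : ℝ) (hs : 0 < s) (hsl : s ≤ lam) (hlam : lam < 1) :
    ∀ k : ℕ, 2 ≤ k → k ≤ n →
      ∀ᵐ ω ∂μ, (μ[Mproc n p H₀ s lam (k - 1) | Ffilt n p H₀ s lam k]) ω
        ≤ Mproc n p H₀ s lam k ω := by
  classical
  intro k hk2 hkn
  set pvec : Ω → (Fin n → ℝ) := fun ω => fun i => p i ω with hpvecdef
  have hpvec : Measurable pvec := measurable_pi_lambda _ hmeas
  have hFeq : Ffilt n p H₀ s lam k = (ASSaux.MX H₀ s lam k).comap pvec :=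
    ASSaux.Ffilt_eq p H₀ s lam k
  have hMXle := ASSaux.MX_le H₀ s lam k
  have hm : Ffilt n p H₀ s lam k ≤ (inferInstance : MeasurableSpace Ω) := by
    rw [hFeq]
    exact (MeasurableSpace.comap_mono hMXle).trans hpvec.comap_le
  haveI : SigmaFinite (μ.trim hm) := inferInstance
  -- identification of the processes with path-space functions
  have hMeq : ∀ k' : ℕ,
      Mproc n p H₀ s lam k' = fun ω => ASSaux.GX H₀ s lam k' (pvec ω) := fun _ => rfl
  -- integrability
  have hMint : ∀ k' : ℕ, Integrable (Mproc n p H₀ s lam k') μ := by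
    intro k'
    refine ⟨((ASSaux.measurable_GX H₀ s lam k').comp hpvec).aestronglyMeasurable, ?_⟩
    exact HasFiniteIntegral.of_bounded
      (C := (H₀.card : ℝ)) (ae_of_all _ fun ω => ASSaux.GX_norm_le H₀ s lam k' (pvec ω))
  -- M(k) is 𝓕ₖ-strongly measurable
  have hcnt : Measurable[Ffilt n p H₀ s lam k]
      (fun ω => (Vplus n p H₀ s k ω, Vminus n p H₀ lam k ω)) := by
    rw [measurable_iff_comap_le]
    refine le_trans (MeasurableSpace.comap_mono le_top) ?_
    exact le_sup_of_le_left le_sup_right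
  have hMkSM : StronglyMeasurable[Ffilt n p H₀ s lam k] (Mproc n p H₀ s lam k) := by
    apply Measurable.stronglyMeasurable
    have : Mproc n p H₀ s lam k
        = (fun q : ℕ × ℕ => (q.1 : ℝ) / (1 + (q.2 : ℝ)))
          ∘ (fun ω => (Vplus n p H₀ s k ω, Vminus n p H₀ lam k ω)) := rfl
    rw [this]
    exact (measurable_of_countable _).comp hcnt
  -- the key set-integral inequality
  have key : ∀ A : Set Ω, MeasurableSet[Ffilt n p H₀ s lam k] A →
      ∫ ω in A, Mproc n p H₀ s lam (k - 1) ω ∂μ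
        ≤ ∫ ω in A, Mproc n p H₀ s lam k ω ∂μ := by
    intro A hA
    rw [hFeq] at hA
    obtain ⟨B, hBm, rfl⟩ := hA
    have hB : MeasurableSet B := hMXle B hBm
    set ν : Measure (Fin n → ℝ) := μ.map pvec with hν
    haveI : IsProbabilityMeasure ν := Measure.isProbabilityMeasure_map hpvec.aemeasurable
    have hGint : ∀ k' : ℕ, Integrable (ASSaux.GX H₀ s lam k') ν := by
      intro k'
      refine ⟨(ASSaux.measurable_GX H₀ s lam k').aestronglyMeasurable, ?_⟩
      exact HasFiniteIntegral.of_bounded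
        (C := (H₀.card : ℝ)) (ae_of_all _ fun x => ASSaux.GX_norm_le H₀ s lam k' x)
    have htran : ∀ k' : ℕ,
        ∫ ω in pvec ⁻¹' B, Mproc n p H₀ s lam k' ω ∂μ
          = ∫ x in B, ASSaux.GX H₀ s lam k' x ∂ν := by
      intro k'
      rw [hMeq k']
      exact (setIntegral_map hB
        (ASSaux.measurable_GX H₀ s lam k').aestronglyMeasurable hpvec.aemeasurable).symm
    rw [htran (k-1), htran k]
    -- the distinguished index
    have hkn' : k - 1 < n := by omega
    set i₀ : Fin n := ⟨k - 1, hkn'⟩ with hi₀def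
    have hi₀1 : (i₀ : ℕ) + 1 = k := by
      show (k - 1) + 1 = k
      omega
    by_cases hi₀H : i₀ ∈ H₀
    · -- main case: use exchangeability
      set T : Finset (Fin n) := H₀.filter (fun i : Fin n => (i : ℕ) + 1 ≤ k) with hT
      have hi₀T : i₀ ∈ T := Finset.mem_filter.2 ⟨hi₀H, by omega⟩
      have hcard : 0 < T.card := Finset.card_pos.2 ⟨i₀, hi₀T⟩
      have hHint : ∀ j ∈ T, Integrable (ASSaux.HX H₀ s lam k j) ν := by
        intro j hj
        obtain ⟨hjH, hjk⟩ := Finset.mem_filter.1 hj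
        refine ⟨(ASSaux.measurable_HX H₀ s lam k j).aestronglyMeasurable, ?_⟩
        exact HasFiniteIntegral.of_bounded (C := (H₀.card : ℝ))
          (ae_of_all _ fun x => ASSaux.HX_norm_le H₀ s lam k hjH hjk x)
      -- the swap step
      have hswap : ∀ j ∈ T,
          ∫ x in B, ASSaux.HX H₀ s lam k j x ∂ν
            = ∫ x in B, ASSaux.HX H₀ s lam k i₀ x ∂ν := by
        intro j hj
        obtain ⟨hjH, hjk⟩ := Finset.mem_filter.1 hj
        set W : (Fin n → ℝ) → (Fin n → ℝ) :=
          fun x => fun i => x (Equiv.swap i₀ j i) with hWdef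
        have hWm : Measurable W :=
          measurable_pi_lambda _ fun i => measurable_pi_apply _
        have hmapW : ν.map W = ν := by
          rw [hν, Measure.map_map hWm hpvec]
          have hcomp : W ∘ pvec = (fun ω => fun i => p (Equiv.swap i₀ j i) ω) := rfl
          rw [hcomp]
          exact ASSaux.map_swap_eq μ p H₀ hmeas hnulliid hnullident hblockindep hi₀H hjH
        have hWB : W ⁻¹' B = B :=
          ASSaux.MX_inv H₀ s lam k hi₀H hjH (by omega) hjk hBm
        have hWfun : ∀ x, ASSaux.HX H₀ s lam k j (W x) = ASSaux.HX H₀ s lam k i₀ x := by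
          intro x
          unfold ASSaux.HX
          rw [ASSaux.VplusX_swap H₀ s k hi₀H hjH (by omega) hjk x,
            ASSaux.VminusX_swap H₀ lam k hi₀H hjH (by omega) hjk x]
          have : W x j = x i₀ := by
            show x (Equiv.swap i₀ j j) = x i₀
            rw [Equiv.swap_apply_right]
          rw [this]
        conv_lhs => rw [← hmapW]
        rw [setIntegral_map hB
          (ASSaux.measurable_HX H₀ s lam k j).aestronglyMeasurable hWm.aemeasurable, hWB]
        exact setIntegral_congr_fun hB fun x _ => hWfun x
      -- G(k-1) = HX i₀ pointwise
      have hGH : ∀ x, ASSaux.GX H₀ s lam (k-1) x = ASSaux.HX H₀ s lam k i₀ x :=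
        fun x => ASSaux.GX_pred H₀ s lam hi₀1 hi₀H x
      have hstep1 : (T.card : ℝ) * ∫ x in B, ASSaux.GX H₀ s lam (k-1) x ∂ν
          = ∑ j ∈ T, ∫ x in B, ASSaux.HX H₀ s lam k j x ∂ν := by
        rw [Finset.sum_congr rfl hswap, Finset.sum_const, nsmul_eq_mul]
        congr 1
        exact setIntegral_congr_fun hB fun x _ => hGH x
      have hstep2 : ∑ j ∈ T, ∫ x in B, ASSaux.HX H₀ s lam k j x ∂ν
          = ∫ x in B, (∑ j ∈ T, ASSaux.HX H₀ s lam k j x) ∂ν := by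
        rw [← integral_finset_sum T fun j hj => (hHint j hj).integrableOn]
      have hstep3 : ∫ x in B, (∑ j ∈ T, ASSaux.HX H₀ s lam k j x) ∂ν
          ≤ ∫ x in B, (T.card : ℝ) * ASSaux.GX H₀ s lam k x ∂ν := by
        apply setIntegral_mono_on
          (integrable_finset_sum T fun j hj => hHint j hj).integrableOn
          ((hGint k).const_mul _).integrableOn hB
        intro x _
        exact ASSaux.sum_HX_le H₀ hsl k x
      have hstep4 : ∫ x in B, (T.card : ℝ) * ASSaux.GX H₀ s lam k x ∂ν
          = (T.card : ℝ) * ∫ x in B, ASSaux.GX H₀ s lam k x ∂ν := by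
        exact integral_const_mul _ _
      have hTpos : (0:ℝ) < (T.card : ℝ) := by exact_mod_cast hcard
      have := hstep1.le.trans (hstep2.le.trans (hstep3.trans hstep4.le))
      exact le_of_mul_le_mul_left this hTpos
    · -- trivial case: G(k-1) = G(k)
      refine le_of_eq ?_
      exact setIntegral_congr_fun hB fun x _ =>
        ASSaux.GX_pred_of_not_mem H₀ s lam hi₀1 hi₀H x
  -- conclude via the trimmed measure
  refine ae_le_of_ae_le_trim (hm := hm) ?_
  apply ae_le_of_forall_setIntegral_le
    (integrable_condExp.trim hm stronglyMeasurable_condExp)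
    ((hMint k).trim hm hMkSM)
  intro A hA _
  rw [← setIntegral_trim hm stronglyMeasurable_condExp hA,
    ← setIntegral_trim hm hMkSM hA,
    setIntegral_condExp hm (hMint (k-1)) hA]
  exact key A hA


end
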